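/- Let U and V be real Banach spaces and let T : U → V be a bounded linear operator whose kernel is finite-dimensional and whose range is closed and of finite codimension in V. Let W ⊆ U be a closed subspace of finite codimension such that finrank(U/W) + finrank(V/range T) = finrank(ker T), and suppose there is a constant C > 0 such that ‖T x‖ ≥ C ‖x‖ for every x ∈ W. Then T maps W bijectively onto V; in particular, for every v ∈ V there is a unique w ∈ W with T w = v, and this w satisfies ‖w‖ ≤ C⁻¹ ‖v‖. -/

import Mathlib

/-- If `T : U → V` is a bounded linear operator between real Banach
spaces with finite-dimensional kernel and closed range of finite codimension, and
`W ⊆ U` is a closed subspace of finite codimension whose codimension matches the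
index of `T` (i.e. `codim W + codim (range T) = dim (ker T)`), and `‖T x‖ ≥ C ‖x‖`
on `W` for some `C > 0`, then `T` maps `W` bijectively onto `V`, with the unique
preimage `w ∈ W` of each `v` satisfying `‖w‖ ≤ C⁻¹ ‖v‖`. -/
theorem gluing_linear_step
    {U V : Type*} [NormedAddCommGroup U] [NormedSpace ℝ U] [CompleteSpace U]
    [NormedAddCommGroup V] [NormedSpace ℝ V] [CompleteSpace V]
    (T : U →L[ℝ] V)
    (hker : FiniteDimensional ℝ (LinearMap.ker (T : U →ₗ[ℝ] V)))
    (hrange : IsClosed (LinearMap.range (T : U →ₗ[ℝ] V) : Set V))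
    (hcoker : FiniteDimensional ℝ (V ⧸ LinearMap.range (T : U →ₗ[ℝ] V)))
    (W : Submodule ℝ U) (hWclosed : IsClosed (W : Set U))
    (hWcodim : FiniteDimensional ℝ (U ⧸ W))
    (hindex : Module.finrank ℝ (U ⧸ W) + Module.finrank ℝ (V ⧸ LinearMap.range (T : U →ₗ[ℝ] V))
      = Module.finrank ℝ (LinearMap.ker (T : U →ₗ[ℝ] V)))
    (C : ℝ) (hC : 0 < C)
    (hbound : ∀ x ∈ W, C * ‖x‖ ≤ ‖T x‖) :
    ∀ v : V, ∃ w : U, w ∈ W ∧ T w = v ∧ ‖w‖ ≤ C⁻¹ * ‖v‖ ∧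
      ∀ w' ∈ W, T w' = v → w' = w := by
  -- If `x ∈ W` and `T x = 0` then `x = 0`.
  have hinj : ∀ x ∈ W, T x = 0 → x = 0 := by
    intro x hxW hx
    have h := hbound x hxW
    rw [hx, norm_zero] at h
    have hx0 : ‖x‖ ≤ 0 := by nlinarith [norm_nonneg x]
    exact norm_le_zero_iff.mp hx0
  -- The image of `W` under `T`.
  set TW : Submodule ℝ V := W.map (T : U →ₗ[ℝ] V) with hTWdef
  -- The induced map `U ⧸ W → V ⧸ TW`.
  have hWle : W ≤ LinearMap.ker (TW.mkQ ∘ₗ (T : U →ₗ[ℝ] V)) := by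
    intro x hx
    simp only [LinearMap.mem_ker, LinearMap.comp_apply, Submodule.mkQ_apply,
      Submodule.Quotient.mk_eq_zero]
    exact Submodule.mem_map_of_mem hx
  set f : (U ⧸ W) →ₗ[ℝ] (V ⧸ TW) := W.liftQ (TW.mkQ ∘ₗ (T : U →ₗ[ℝ] V)) hWle with hfdef
  have hf_apply : ∀ x : U, f (W.mkQ x) = TW.mkQ (T x) := fun x => rfl
  -- `ker T` embeds into `ker f`.
  have hjmem : ∀ x : LinearMap.ker (T : U →ₗ[ℝ] V), (W.mkQ ∘ₗ (LinearMap.ker (T : U →ₗ[ℝ] V)).subtype) x ∈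
      LinearMap.ker f := by
    intro x
    simp only [LinearMap.mem_ker, LinearMap.comp_apply, Submodule.subtype_apply]
    rw [hf_apply, (show T x.1 = 0 from x.2)]
    simp
  set j : LinearMap.ker (T : U →ₗ[ℝ] V) →ₗ[ℝ] LinearMap.ker f :=
    LinearMap.codRestrict _ (W.mkQ ∘ₗ (LinearMap.ker (T : U →ₗ[ℝ] V)).subtype) hjmem with hjdef
  have hjinj : Function.Injective j := by
    intro x y hxy
    have h1 : W.mkQ x.1 = W.mkQ y.1 := congrArg Subtype.val hxy
    have h2 : x.1 - y.1 ∈ W := by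
      rwa [← Submodule.Quotient.mk_eq_zero, ← Submodule.mkQ_apply, map_sub, sub_eq_zero]
    have h3 : T (x.1 - y.1) = 0 := by
      rw [map_sub, (show T x.1 = 0 from x.2), (show T y.1 = 0 from y.2), sub_zero]
    have := hinj _ h2 h3
    exact Subtype.ext (by rwa [sub_eq_zero] at this)
  have hk_le : Module.finrank ℝ (LinearMap.ker (T : U →ₗ[ℝ] V)) ≤ Module.finrank ℝ (LinearMap.ker f) :=
    LinearMap.finrank_le_finrank_of_injective hjinj
  -- Rank-nullity for `f`.
  have hrn := LinearMap.finrank_range_add_finrank_ker f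
  -- Conclude the numerical facts.
  have hb0 : Module.finrank ℝ (V ⧸ LinearMap.range (T : U →ₗ[ℝ] V)) = 0 := by omega
  have hr0 : Module.finrank ℝ (LinearMap.range f) = 0 := by omega
  -- `range T = ⊤`.
  have hRtop : LinearMap.range (T : U →ₗ[ℝ] V) = ⊤ := by
    rw [← Submodule.Quotient.subsingleton_iff]
    exact Module.finrank_zero_iff.mp hb0
  -- `range f = ⊥`, hence `T x ∈ TW` for all `x`.
  have hrange_f : LinearMap.range f = ⊥ := Submodule.finrank_eq_zero.mp hr0
  have hTx : ∀ x : U, T x ∈ TW := by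
    intro x
    have : f (W.mkQ x) = 0 := by
      rw [← LinearMap.mem_ker, LinearMap.ker_eq_top.mpr ?_]
      · trivial
      · rwa [← LinearMap.range_eq_bot]
    rw [hf_apply] at this
    rwa [Submodule.mkQ_apply, Submodule.Quotient.mk_eq_zero] at this
  -- Now prove the statement.
  intro v
  obtain ⟨x, hx⟩ := LinearMap.range_eq_top.mp hRtop v
  obtain ⟨w, hwW, hwT⟩ := hTx x
  have hTw : T w = v := by rw [← hx]; exact hwT
  refine ⟨w, hwW, hTw, ?_, ?_⟩
  · have h2 : C * ‖w‖ ≤ ‖v‖ := by rw [← hTw]; exact hbound w hwW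
    calc ‖w‖ = C⁻¹ * (C * ‖w‖) := by field_simp
      _ ≤ C⁻¹ * ‖v‖ := by gcongr
  · intro w' hw'W hw'T
    have h2 : w' - w ∈ W := W.sub_mem hw'W hwW
    have h3 : T (w' - w) = 0 := by rw [map_sub, hw'T, hTw, sub_self]
    have := hinj _ h2 h3
    rwa [sub_eq_zero] at this
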